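/- Let Q ≥ 2 be an integer and let d > 0. Let A = { ((2k − 1 − Q) + i·(2l − 1 − Q))·d : k, l ∈ {1, …, Q} } ⊆ ℂ be the Q²-point square QAM constellation, and for θ ∈ ℝ let A_θ = { e^{iθ}·z : z ∈ A } be its rotation by θ. Then: (a) for every θ ∈ ℝ, CPD(A_θ) ≤ 4d²/√5; and (b) for θ₀ = arctan(2)/2 one has CPD(A_{θ₀}) = 4d²/√5. Hence the co-ordinate product distance of the rotated square QAM constellation is maximized at the rotation angle arctan(2)/2 ≈ 31.7175°, where it equals 4d²/√5. -/

import Mathlib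

open Complex

/-- The co-ordinate product distance (CPD) of a set of complex signal points:
the infimum over pairs of distinct points of the product of the absolute
differences of the real and imaginary coordinates. -/
noncomputable def CPD (A : Set ℂ) : ℝ :=
  sInf {r : ℝ | ∃ u ∈ A, ∃ v ∈ A, u ≠ v ∧ r = |(u - v).re| * |(u - v).im|}

lemma aux_nonzero (a b : ℤ) (h : ¬(a = 0 ∧ b = 0)) : a^2 + a*b - b^2 ≠ 0 := by
  intro h0
  rcases eq_or_ne b 0 with hb | hb
  · apply h
    constructor
    · nlinarith
    · exact hb
  · have key : (2*a+b)^2 = 5*b^2 := by linear_combination 4*h0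
    have hirr : Irrational (Real.sqrt 5) := by
      simpa using (by norm_num : Nat.Prime 5).irrational_sqrt
    set q : ℚ := (2*a+b) / b with hq
    have hb' : (b:ℚ) ≠ 0 := Int.cast_ne_zero.2 hb
    have hq2 : (q:ℝ)^2 = 5 := by
      have : q^2 = 5 := by
        rw [hq, div_pow, div_eq_iff (pow_ne_zero 2 hb')]
        exact_mod_cast key
      rw [show ((q:ℝ)) ^2 = ((q^2 : ℚ) : ℝ) by push_cast; ring, this]; norm_num
    have : Real.sqrt 5 = ((|q| : ℚ) : ℝ) := by
      rw [← hq2, Real.sqrt_sq_eq_abs]; push_cast; ring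
    exact Rat.not_irrational |q| (this ▸ hirr)

lemma calc_prod (d θ : ℝ) (a b : ℤ) (u v : ℂ)
    (huv : u - v = (((2*a : ℤ) : ℂ) + Complex.I * ((2*b : ℤ) : ℂ)) * (d : ℂ)) :
    |(Complex.exp ((θ:ℂ) * Complex.I) * u - Complex.exp ((θ:ℂ) * Complex.I) * v).re| *
      |(Complex.exp ((θ:ℂ) * Complex.I) * u - Complex.exp ((θ:ℂ) * Complex.I) * v).im|
    = 4 * d^2 * |((a:ℝ)^2 - (b:ℝ)^2) * (Real.cos θ * Real.sin θ)
        + (a:ℝ) * b * (Real.cos θ^2 - Real.sin θ^2)| := by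
  have h1 : Complex.exp ((θ:ℂ) * Complex.I) * u - Complex.exp ((θ:ℂ) * Complex.I) * v
      = Complex.exp ((θ:ℂ) * Complex.I) * (u - v) := by ring
  have hre : (u - v).re = 2 * a * d := by rw [huv]; simp
  have him : (u - v).im = 2 * b * d := by rw [huv]; simp
  rw [h1, ← abs_mul, Complex.mul_re, Complex.mul_im,
    Complex.exp_ofReal_mul_I_re, Complex.exp_ofReal_mul_I_im, hre, him]
  rw [show (Real.cos θ * (2*a*d) - Real.sin θ * (2*b*d)) *
        (Real.cos θ * (2*b*d) + Real.sin θ * (2*a*d))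
      = (4*d^2) * (((a:ℝ)^2 - (b:ℝ)^2) * (Real.cos θ * Real.sin θ)
        + (a:ℝ) * b * (Real.cos θ^2 - Real.sin θ^2)) by ring, abs_mul]
  congr 1
  rw [_root_.abs_of_nonneg (by positivity : (0:ℝ) ≤ 4 * d^2)]

/-- The CPD of the rotated square `Q²`-point QAM constellation is maximized at
the rotation angle `arctan 2 / 2`, where it equals `4 d² / √5`. -/
theorem square_QAM_optimal_rotation
    (Q : ℕ) (hQ : 2 ≤ Q) (d : ℝ) (hd : 0 < d) (A : Set ℂ)
    (hA : A = {z : ℂ | ∃ k l : ℤ, 1 ≤ k ∧ k ≤ (Q : ℤ) ∧ 1 ≤ l ∧ l ≤ (Q : ℤ) ∧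
      z = (((2*k - 1 - (Q : ℤ) : ℤ) : ℂ) + Complex.I * ((2*l - 1 - (Q : ℤ) : ℤ) : ℂ)) * (d : ℂ)}) :
    (∀ θ : ℝ,
      CPD ((fun z => Complex.exp ((θ : ℂ) * Complex.I) * z) '' A) ≤ 4 * d^2 / Real.sqrt 5) ∧
    CPD ((fun z => Complex.exp (((Real.arctan 2 / 2 : ℝ) : ℂ) * Complex.I) * z) '' A)
      = 4 * d^2 / Real.sqrt 5 := by
  set S : ℝ → Set ℝ := fun θ =>
    {r : ℝ | ∃ u ∈ (fun z => Complex.exp ((θ : ℂ) * Complex.I) * z) '' A,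
      ∃ v ∈ (fun z => Complex.exp ((θ : ℂ) * Complex.I) * z) '' A,
      u ≠ v ∧ r = |(u - v).re| * |(u - v).im|} with hS
  have hCPD : ∀ θ : ℝ, CPD ((fun z => Complex.exp ((θ : ℂ) * Complex.I) * z) '' A)
      = sInf (S θ) := fun θ => rfl
  -- structure of elements of S θ
  have hstruct : ∀ θ : ℝ, ∀ r ∈ S θ, ∃ a b : ℤ, ¬(a = 0 ∧ b = 0) ∧
      r = 4 * d^2 * |((a:ℝ)^2 - (b:ℝ)^2) * (Real.cos θ * Real.sin θ)
        + (a:ℝ) * b * (Real.cos θ^2 - Real.sin θ^2)| := by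
    intro θ r hr
    obtain ⟨u, ⟨u₀, hu₀, rfl⟩, v, ⟨v₀, hv₀, rfl⟩, hne, hrq⟩ := hr
    rw [hA] at hu₀ hv₀
    obtain ⟨k, l, _, _, _, _, rfl⟩ := hu₀
    obtain ⟨k', l', _, _, _, _, rfl⟩ := hv₀
    refine ⟨k - k', l - l', ?_, ?_⟩
    · rintro ⟨h1, h2⟩
      apply hne
      have hk : k = k' := by omega
      have hl : l = l' := by omega
      rw [hk, hl]
    · rw [hrq]
      apply calc_prod
      push_cast
      ring
  -- membership of small differences
  have hmem : ∀ θ : ℝ, ∀ a b : ℤ, 0 ≤ a → a ≤ 1 → 0 ≤ b → b ≤ 1 → ¬(a = 0 ∧ b = 0) →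
      4 * d^2 * |((a:ℝ)^2 - (b:ℝ)^2) * (Real.cos θ * Real.sin θ)
        + (a:ℝ) * b * (Real.cos θ^2 - Real.sin θ^2)| ∈ S θ := by
    intro θ a b ha ha' hb hb' hab
    set u₀ : ℂ := (((2*(1+a) - 1 - (Q : ℤ) : ℤ) : ℂ)
      + Complex.I * ((2*(1+b) - 1 - (Q : ℤ) : ℤ) : ℂ)) * (d : ℂ) with hu₀def
    set v₀ : ℂ := (((2*(1:ℤ) - 1 - (Q : ℤ) : ℤ) : ℂ)
      + Complex.I * ((2*(1:ℤ) - 1 - (Q : ℤ) : ℤ) : ℂ)) * (d : ℂ) with hv₀def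
    have hu₀ : u₀ ∈ A := by rw [hA]; exact ⟨1 + a, 1 + b, by omega, by omega, by omega, by omega, rfl⟩
    have hv₀ : v₀ ∈ A := by rw [hA]; exact ⟨1, 1, by omega, by omega, by omega, by omega, rfl⟩
    have huv : u₀ - v₀ = (((2*a : ℤ) : ℂ) + Complex.I * ((2*b : ℤ) : ℂ)) * (d : ℂ) := by
      rw [hu₀def, hv₀def]; push_cast; ring
    have hne : Complex.exp ((θ : ℂ) * Complex.I) * u₀ ≠ Complex.exp ((θ : ℂ) * Complex.I) * v₀ := by
      intro h
      have h0 : u₀ = v₀ := by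
        have := Complex.exp_ne_zero ((θ : ℂ) * Complex.I)
        field_simp at h
        tauto
      have h1 : u₀ - v₀ = 0 := by rw [h0]; ring
      rw [huv] at h1
      have h2 : ((((2*a : ℤ) : ℂ) + Complex.I * ((2*b : ℤ) : ℂ)) * (d : ℂ)).re = 0 := by
        rw [h1]; simp
      have h3 : ((((2*a : ℤ) : ℂ) + Complex.I * ((2*b : ℤ) : ℂ)) * (d : ℂ)).im = 0 := by
        rw [h1]; simp
      simp at h2 h3
      apply hab
      constructor
      · rcases h2 with h2 | h2
        · exact_mod_cast h2
        · exact absurd h2 hd.ne'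
      · rcases h3 with h3 | h3
        · exact_mod_cast h3
        · exact absurd h3 hd.ne'
    exact ⟨Complex.exp ((θ : ℂ) * Complex.I) * u₀, ⟨u₀, hu₀, rfl⟩,
      Complex.exp ((θ : ℂ) * Complex.I) * v₀, ⟨v₀, hv₀, rfl⟩, hne,
      (calc_prod d θ a b u₀ v₀ huv).symm⟩
  have hBdd : ∀ θ : ℝ, BddBelow (S θ) := by
    intro θ
    refine ⟨0, fun r hr => ?_⟩
    obtain ⟨u, _, v, _, _, rfl⟩ := hr
    positivity
  have h5 : (0:ℝ) < Real.sqrt 5 := Real.sqrt_pos.mpr (by norm_num)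
  have h5sq : Real.sqrt 5 ^ 2 = 5 := Real.sq_sqrt (by norm_num)
  constructor
  · -- part (a)
    intro θ
    rw [hCPD]
    set c := Real.cos θ
    set s := Real.sin θ
    have hpyth : s^2 + c^2 = 1 := Real.sin_sq_add_cos_sq θ
    have key : |c * s| ≤ 1 / Real.sqrt 5 ∨ |c^2 - s^2| ≤ 1 / Real.sqrt 5 := by
      by_contra h
      push_neg at h
      obtain ⟨h1, h2⟩ := h
      have e1 : (1 / Real.sqrt 5)^2 < (c*s)^2 := by
        rw [← _root_.sq_abs (c*s)]
        exact pow_lt_pow_left₀ h1 (by positivity) (by norm_num)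
      have e2 : (1 / Real.sqrt 5)^2 < (c^2 - s^2)^2 := by
        rw [← _root_.sq_abs (c^2 - s^2)]
        exact pow_lt_pow_left₀ h2 (by positivity) (by norm_num)
      have e3 : (1 / Real.sqrt 5)^2 = 1/5 := by
        rw [div_pow, h5sq]; norm_num
      rw [e3] at e1 e2
      nlinarith
    rcases key with hk | hk
    · have hm := hmem θ 1 0 (by norm_num) (by norm_num) (by norm_num) (by norm_num) (by simp)
      have heq : ((1:ℤ):ℝ)^2 - ((0:ℤ):ℝ)^2 = 1 ∧ ((1:ℤ):ℝ) * ((0:ℤ):ℝ) = 0 := by norm_num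
      calc sInf (S θ) ≤ 4 * d^2 * |(((1:ℤ):ℝ)^2 - ((0:ℤ):ℝ)^2) * (c * s)
            + ((1:ℤ):ℝ) * ((0:ℤ):ℝ) * (c^2 - s^2)| := csInf_le (hBdd θ) hm
        _ = 4 * d^2 * |c * s| := by norm_num
        _ ≤ 4 * d^2 * (1 / Real.sqrt 5) := by
            apply mul_le_mul_of_nonneg_left hk (by positivity)
        _ = 4 * d^2 / Real.sqrt 5 := by ring
    · have hm := hmem θ 1 1 (by norm_num) (by norm_num) (by norm_num) (by norm_num) (by simp)
      calc sInf (S θ) ≤ 4 * d^2 * |(((1:ℤ):ℝ)^2 - ((1:ℤ):ℝ)^2) * (c * s)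
            + ((1:ℤ):ℝ) * ((1:ℤ):ℝ) * (c^2 - s^2)| := csInf_le (hBdd θ) hm
        _ = 4 * d^2 * |c^2 - s^2| := by norm_num
        _ ≤ 4 * d^2 * (1 / Real.sqrt 5) := by
            apply mul_le_mul_of_nonneg_left hk (by positivity)
        _ = 4 * d^2 / Real.sqrt 5 := by ring
  · -- part (b)
    set θ₀ : ℝ := Real.arctan 2 / 2 with hθ₀
    rw [hCPD]
    have hsin2 : Real.sin (Real.arctan 2) = 2 / Real.sqrt 5 := by
      rw [Real.sin_arctan]; norm_num
    have hcos2 : Real.cos (Real.arctan 2) = 1 / Real.sqrt 5 := by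
      rw [Real.cos_arctan]; norm_num
    have h2θ : 2 * θ₀ = Real.arctan 2 := by rw [hθ₀]; ring
    have hcs : Real.cos θ₀ * Real.sin θ₀ = 1 / Real.sqrt 5 := by
      have := Real.sin_two_mul θ₀
      rw [h2θ, hsin2] at this
      field_simp at this ⊢
      linarith
    have hc2 : Real.cos θ₀ ^ 2 - Real.sin θ₀ ^ 2 = 1 / Real.sqrt 5 := by
      have h1 := Real.cos_two_mul θ₀
      rw [h2θ, hcos2] at h1
      have h2 := Real.sin_sq_add_cos_sq θ₀
      nlinarith
    apply le_antisymm
    · have hm := hmem θ₀ 1 0 (by norm_num) (by norm_num) (by norm_num) (by norm_num) (by simp)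
      calc sInf (S θ₀) ≤ 4 * d^2 * |(((1:ℤ):ℝ)^2 - ((0:ℤ):ℝ)^2) * (Real.cos θ₀ * Real.sin θ₀)
            + ((1:ℤ):ℝ) * ((0:ℤ):ℝ) * (Real.cos θ₀^2 - Real.sin θ₀^2)| := csInf_le (hBdd θ₀) hm
        _ = 4 * d^2 * |Real.cos θ₀ * Real.sin θ₀| := by norm_num
        _ = 4 * d^2 / Real.sqrt 5 := by
            rw [hcs, _root_.abs_of_nonneg (by positivity : (0:ℝ) ≤ 1 / Real.sqrt 5)]; ring
    · apply le_csInf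
      · exact ⟨_, hmem θ₀ 1 0 (by norm_num) (by norm_num) (by norm_num) (by norm_num) (by simp)⟩
      · intro r hr
        obtain ⟨a, b, hab, rfl⟩ := hstruct θ₀ r hr
        rw [hcs, hc2]
        have hEeq : ((a:ℝ)^2 - (b:ℝ)^2) * (1 / Real.sqrt 5)
            + (a:ℝ) * b * (1 / Real.sqrt 5)
            = ((a:ℝ)^2 + a * b - b^2) * (1 / Real.sqrt 5) := by ring
        rw [hEeq, abs_mul, _root_.abs_of_nonneg (by positivity : (0:ℝ) ≤ 1 / Real.sqrt 5)]
        have hint : (1:ℝ) ≤ |(a:ℝ)^2 + a * b - b^2| := by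
          have := Int.one_le_abs (aux_nonzero a b hab)
          calc (1:ℝ) = ((1:ℤ):ℝ) := by norm_num
            _ ≤ ((|a^2 + a*b - b^2| : ℤ) : ℝ) := by exact_mod_cast this
            _ = |(a:ℝ)^2 + a * b - b^2| := by push_cast; ring_nf
        calc 4 * d^2 / Real.sqrt 5 = 4 * d^2 * (1 * (1 / Real.sqrt 5)) := by ring
          _ ≤ 4 * d^2 * (|(a:ℝ)^2 + a * b - b^2| * (1 / Real.sqrt 5)) := by
              apply mul_le_mul_of_nonneg_left _ (by positivity)
              apply mul_le_mul_of_nonneg_right hint (by positivity)
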